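/- arXiv:2011.01784 — 3 statements merged into one kernel-verified Lean document; each statement's English description precedes it below -/
import Mathlib

section
/- If p, q, s, t are positive integers with p > q ≥ 1, gcd(p,q)=1, satisfying the Markov-type equation p² + s² + t² = 3pst, and q·t ≡ ±3s (mod p), then there exists an integer c such that c² ≡ pq − 1 (mod p²) and p divides cq + 3. -/
/-- Sorting a triple of positive integers, preserving sum, product and sum of squares. -/
lemma es_sort3 (x y z : ℤ) (hx : 0 < x) (hy : 0 < y) (hz : 0 < z) :
    ∃ a b c : ℤ, 0 < a ∧ 0 < b ∧ 0 < c ∧ a ≤ b ∧ b ≤ c ∧ a + b + c = x + y + z ∧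
      a ^ 2 + b ^ 2 + c ^ 2 = x ^ 2 + y ^ 2 + z ^ 2 ∧ a * b * c = x * y * z := by
  rcases le_total x y with h1 | h1 <;> rcases le_total y z with h2 | h2 <;>
    rcases le_total x z with h3 | h3
  · exact ⟨x, y, z, hx, hy, hz, h1, h2, by ring, by ring, by ring⟩
  · exact ⟨x, y, z, hx, hy, hz, h1, h2, by ring, by ring, by ring⟩
  · exact ⟨x, z, y, hx, hz, hy, h3, h2, by ring, by ring, by ring⟩
  · exact ⟨z, x, y, hz, hx, hy, h3, h1, by ring, by ring, by ring⟩
  · exact ⟨y, x, z, hy, hx, hz, h1, h3, by ring, by ring, by ring⟩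
  · exact ⟨y, z, x, hy, hz, hx, h2, h3, by ring, by ring, by ring⟩
  · exact ⟨z, y, x, hz, hy, hx, h2, h1, by ring, by ring, by ring⟩
  · exact ⟨z, y, x, hz, hy, hx, h2, h1, by ring, by ring, by ring⟩

/-- Hurwitz-style descent: x² + y² + z² = N·xyz has no positive solutions for N ≥ 4. -/
lemma es_noSol : ∀ n : ℕ, ∀ N x y z : ℤ, 0 < x → 0 < y → 0 < z → 4 ≤ N →
    (x + y + z).toNat ≤ n → x ^ 2 + y ^ 2 + z ^ 2 = N * (x * y * z) → False := by
  intro n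
  induction n with
  | zero =>
    intro N x y z hx hy hz _ hle _
    omega
  | succ n ih =>
    intro N x y z hx hy hz hN hle heq
    obtain ⟨a, b, c, ha, hb, hc, hab, hbc, hsum, hsq, hprod⟩ := es_sort3 x y z hx hy hz
    have heq' : a ^ 2 + b ^ 2 + c ^ 2 = N * (a * b * c) := by rw [hsq, heq, hprod]
    obtain ⟨d, hd⟩ : ∃ d : ℤ, d = N * a * b - c := ⟨_, rfl⟩
    have hcc' : c * d = a ^ 2 + b ^ 2 := by
      rw [hd]; linear_combination -heq'
    have hdpos : 0 < d := by
      rcases le_or_gt d 0 with h | h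
      · nlinarith [sq_nonneg a, sq_nonneg b]
      · exact h
    have ha1 : 1 ≤ a := ha
    have hb1 : 1 ≤ b := hb
    have hfb : (b - c) * (b - d) < 0 := by
      have hexp : (b - c) * (b - d) = a ^ 2 + 2 * b ^ 2 - N * a * b ^ 2 := by
        linear_combination hcc' - b * hd
      rw [hexp]
      nlinarith [mul_pos ha hb, mul_pos (mul_pos ha hb) hb]
    have hdb : d < b := by
      by_contra hcon
      push_neg at hcon
      nlinarith [mul_nonneg (sub_nonneg.2 hbc) (sub_nonneg.2 hcon)]
    have heqd : a ^ 2 + b ^ 2 + d ^ 2 = N * (a * b * d) := by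
      rw [hd]; linear_combination heq'
    have hlin : a + b + d < x + y + z := by
      have : b ≤ c := hbc
      linarith
    have hmeas : (a + b + d).toNat ≤ n := by omega
    exact ih N a b d ha hb hdpos hN hmeas heqd

/-- Coordinates of a Markov triple are pairwise coprime. -/
lemma es_markov_coprime (p s t : ℤ) (hp : 0 < p) (hs : 0 < s) (ht : 0 < t)
    (h : p ^ 2 + s ^ 2 + t ^ 2 = 3 * p * s * t) : IsCoprime p s := by
  rw [Int.isCoprime_iff_gcd_eq_one]
  by_contra hg
  obtain ⟨r, hr, hrd⟩ := Nat.exists_prime_and_dvd hg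
  have hrp : (r : ℤ) ∣ p := dvd_trans (Int.natCast_dvd_natCast.mpr hrd) (Int.gcd_dvd_left _ _)
  have hrs : (r : ℤ) ∣ s := dvd_trans (Int.natCast_dvd_natCast.mpr hrd) (Int.gcd_dvd_right _ _)
  have hrP : Prime (r : ℤ) := Nat.prime_iff_prime_int.mp hr
  have hrt : (r : ℤ) ∣ t := by
    apply hrP.dvd_of_dvd_pow (n := 2)
    have e : t ^ 2 = p * (3 * s * t - p) - s * s := by linear_combination h
    rw [e]
    exact dvd_sub (hrp.mul_right _) (hrs.mul_left s)
  obtain ⟨P, hP⟩ := hrp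
  obtain ⟨S, hS⟩ := hrs
  obtain ⟨T, hT⟩ := hrt
  have hr2 : (2 : ℤ) ≤ (r : ℤ) := by exact_mod_cast hr.two_le
  have hr0 : (r : ℤ) ≠ 0 := by linarith
  subst hP hS hT
  have hPpos : 0 < P := by
    rcases le_or_gt P 0 with hcon | hcon
    · nlinarith
    · exact hcon
  have hSpos : 0 < S := by
    rcases le_or_gt S 0 with hcon | hcon
    · nlinarith
    · exact hcon
  have hTpos : 0 < T := by
    rcases le_or_gt T 0 with hcon | hcon
    · nlinarith
    · exact hcon
  have key : (r : ℤ) ^ 2 * (P ^ 2 + S ^ 2 + T ^ 2) = (r : ℤ) ^ 2 * ((3 * r) * (P * S * T)) := by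
    linear_combination h
  have key2 : P ^ 2 + S ^ 2 + T ^ 2 = (3 * (r : ℤ)) * (P * S * T) :=
    mul_left_cancel₀ (pow_ne_zero 2 hr0) key
  exact es_noSol (P + S + T).toNat (3 * r) P S T hPpos hSpos hTpos (by linarith) le_rfl key2

/-- The Evans–Smith condition (ES) implies condition (2) of the main theorem. -/
theorem es_implies_condition_two (p q s t : ℤ)
    (hp : 0 < p) (hs : 0 < s) (ht : 0 < t)
    (hq1 : 1 ≤ q) (hqp : q < p) (hcop : IsCoprime p q)
    (hmarkov : p ^ 2 + s ^ 2 + t ^ 2 = 3 * p * s * t)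
    (hcong : q * t ≡ 3 * s [ZMOD p] ∨ q * t ≡ -(3 * s) [ZMOD p]) :
    ∃ c : ℤ, c ^ 2 ≡ p * q - 1 [ZMOD p ^ 2] ∧ p ∣ c * q + 3 := by
  have hps : IsCoprime p s := es_markov_coprime p s t hp hs ht hmarkov
  have hpt : IsCoprime p t := es_markov_coprime p t s hp ht hs (by linear_combination hmarkov)
  have hc2 : IsCoprime (p ^ 2) s := hps.pow_left
  obtain ⟨a0, b, hab⟩ := hc2
  obtain ⟨m, hsb⟩ : ∃ m : ℤ, s * b = 1 + p ^ 2 * m := ⟨-a0, by linear_combination hab⟩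
  rcases hcong with h | h
  · -- q*t ≡ 3*s (mod p)
    obtain ⟨k, hk⟩ : p ∣ 3 * s - q * t := h.dvd
    have hw' : p ∣ s * q + 3 * t := by
      apply hpt.dvd_of_dvd_mul_left
      exact ⟨9 * s * t - 3 * p - k * s, by linear_combination (-s) * hk + 3 * hmarkov⟩
    obtain ⟨w, hw⟩ := hw'
    refine ⟨3 * p - t * b, ?_, ?_⟩
    · rw [Int.modEq_iff_dvd]
      have key : s ^ 2 * ((p * q - 1) - (3 * p - t * b) ^ 2) =
          p ^ 2 * (s * w + 1 - 9 * s ^ 2 + 6 * p * t * s * m - 2 * t ^ 2 * m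
            - p ^ 2 * t ^ 2 * m ^ 2) := by
        linear_combination (p * s) * hw - hmarkov
          + (6 * p * t * s - t ^ 2 * (s * b + 1 + p ^ 2 * m)) * hsb
      have hdvd : p ^ 2 ∣ s ^ 2 * ((p * q - 1) - (3 * p - t * b) ^ 2) := ⟨_, key⟩
      exact (IsCoprime.pow hps).dvd_of_dvd_mul_left hdvd
    · apply hps.dvd_of_dvd_mul_left
      exact ⟨3 * s * q - t * q * p * m + k, by linear_combination hk - (t * q) * hsb⟩
  · -- q*t ≡ -3*s (mod p)
    obtain ⟨k, hk⟩ : p ∣ -(3 * s) - q * t := h.dvd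
    have hw' : p ∣ s * q - 3 * t := by
      apply hpt.dvd_of_dvd_mul_left
      exact ⟨3 * p - 9 * s * t - k * s, by linear_combination (-s) * hk - 3 * hmarkov⟩
    obtain ⟨w, hw⟩ := hw'
    refine ⟨t * b, ?_, ?_⟩
    · rw [Int.modEq_iff_dvd]
      have key : s ^ 2 * ((p * q - 1) - (t * b) ^ 2) =
          p ^ 2 * (s * w + 1 - 2 * t ^ 2 * m - p ^ 2 * t ^ 2 * m ^ 2) := by
        linear_combination (p * s) * hw - hmarkov
          - (t ^ 2 * (s * b + 1 + p ^ 2 * m)) * hsb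
      have hdvd : p ^ 2 ∣ s ^ 2 * ((p * q - 1) - (t * b) ^ 2) := ⟨_, key⟩
      exact (IsCoprime.pow hps).dvd_of_dvd_mul_left hdvd
    · apply hps.dvd_of_dvd_mul_left
      exact ⟨t * q * p * m - k, by linear_combination (-1) * hk + (t * q) * hsb⟩
end

section
/- Let a₁, …, aₙ be integers with aᵢ ≥ 2, and dᵢ defined by d₁ = 1, d₂ = a₁, dₛ = aₛ₋₁dₛ₋₁ − dₛ₋₂ (3 ≤ s ≤ n). Suppose aₙdₙ − dₙ₋₁ = p² and dₙ = p² − pq − 1 for positive coprime integers p > q. Then ∑_{i=1}^{n} (2 − aᵢ)dᵢ = −pq. -/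
/-- Lemma 3.3: ∑ (2 − aᵢ) dᵢ = −pq. -/
theorem sum_two_sub_a_mul_d (n : ℕ) (hn : 2 ≤ n) (a d : ℕ → ℤ) (p q : ℤ)
    (hp : 0 < p) (hq : 0 < q) (hqp : q < p) (hcop : IsCoprime p q)
    (ha : ∀ i, 1 ≤ i → i ≤ n → 2 ≤ a i)
    (hd1 : d 1 = 1) (hd2 : d 2 = a 1)
    (hrec : ∀ s, 3 ≤ s → s ≤ n → d s = a (s - 1) * d (s - 1) - d (s - 2))
    (hlast : a n * d n - d (n - 1) = p ^ 2)
    (hdn : d n = p ^ 2 - p * q - 1) :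
    ∑ i ∈ Finset.Icc 1 n, (2 - a i) * d i = -(p * q) := by
  have key : ∀ m, 2 ≤ m → m ≤ n →
      ∑ i ∈ Finset.Icc 1 m, (2 - a i) * d i
        = 1 + d m - (a m * d m - d (m - 1)) := by
    intro m hm
    induction m, hm using Nat.le_induction with
    | base =>
      intro _
      rw [show Finset.Icc 1 2 = {1, 2} by decide]
      simp [hd1, hd2]
      ring
    | succ m hm ih =>
      intro hmn
      have hmn' : m ≤ n := le_trans (Nat.le_succ m) hmn
      have hrec' : d (m + 1) = a m * d m - d (m - 1) := by
        have := hrec (m + 1) (by omega) hmn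
        simpa [Nat.succ_sub_succ, show m + 1 - 2 = m - 1 by omega] using this
      rw [Finset.sum_Icc_succ_top (by omega), ih hmn']
      simp only [Nat.add_sub_cancel]
      linear_combination hrec'
  have := key n hn le_rfl
  rw [this, hlast, hdn]
  ring
end

section
/- Let p, s, t be positive integers with p² + s² + t² = 3pst and gcd(s, p) = gcd(t, p) = 1. Let a be an integer with a·s ≡ t (mod p²) (an inverse computation mod p²). Then a + a⁻¹ ≡ 3p (mod p²), i.e., a² − 3pa + 1 ≡ 0 (mod p²); in particular a² ≡ −1 (mod p). -/
/-- For a Markov-type triple, a ≡ t·s⁻¹ (mod p²) satisfies a² − 3pa + 1 ≡ 0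
    (mod p²); in particular a² ≡ −1 (mod p). -/
theorem a_quadratic_cong (p s t a : ℤ) (hp : 0 < p) (hs : 0 < s) (ht : 0 < t)
    (hmarkov : p ^ 2 + s ^ 2 + t ^ 2 = 3 * p * s * t)
    (hsp : IsCoprime s p) (htp : IsCoprime t p)
    (ha : a * s ≡ t [ZMOD p ^ 2]) :
    a ^ 2 - 3 * p * a + 1 ≡ 0 [ZMOD p ^ 2] ∧ a ^ 2 ≡ -1 [ZMOD p] := by
  have h1 : (a ^ 2 - 3 * p * a + 1) * s ^ 2 ≡ 0 [ZMOD p ^ 2] := by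
    have h2 : a * s * (a * s) - 3 * p * (a * s) * s + s ^ 2 ≡
        t * t - 3 * p * t * s + s ^ 2 [ZMOD p ^ 2] :=
      ((ha.mul ha).sub (((Int.ModEq.refl (3 * p)).mul ha).mul (Int.ModEq.refl s))).add
        (Int.ModEq.refl (s ^ 2))
    have h3 : t ^ 2 - 3 * p * t * s + s ^ 2 = -(p ^ 2) := by linarith
    calc (a ^ 2 - 3 * p * a + 1) * s ^ 2
        = a * s * (a * s) - 3 * p * (a * s) * s + s ^ 2 := by ring
      _ ≡ t * t - 3 * p * t * s + s ^ 2 [ZMOD p ^ 2] := h2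
      _ = t ^ 2 - 3 * p * t * s + s ^ 2 := by ring
      _ = -(p ^ 2) := h3
      _ ≡ 0 [ZMOD p ^ 2] := Int.modEq_zero_iff_dvd.mpr ⟨-1, by ring⟩
  have hco : IsCoprime (p ^ 2) (s ^ 2) := (hsp.symm.pow : IsCoprime (p ^ 2) (s ^ 2))
  have hdvd : p ^ 2 ∣ (a ^ 2 - 3 * p * a + 1) * s ^ 2 :=
    Int.modEq_zero_iff_dvd.mp h1
  have hmain : a ^ 2 - 3 * p * a + 1 ≡ 0 [ZMOD p ^ 2] :=
    Int.modEq_zero_iff_dvd.mpr (hco.dvd_of_dvd_mul_right hdvd)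
  refine ⟨hmain, ?_⟩
  have hmodp : a ^ 2 - 3 * p * a + 1 ≡ 0 [ZMOD p] :=
    hmain.of_dvd ⟨p, by ring⟩
  have h3p : (3 * p * a : ℤ) ≡ 0 [ZMOD p] :=
    Int.modEq_zero_iff_dvd.mpr ⟨3 * a, by ring⟩
  calc a ^ 2 = (a ^ 2 - 3 * p * a + 1) + 3 * p * a + (-1) := by ring
    _ ≡ 0 + 0 + (-1) [ZMOD p] := (hmodp.add h3p).add (Int.ModEq.refl _)
    _ = -1 := by ring
end
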